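/- The deficiency graph of a pentagonal geometry PENT(k,r) is k-regular, and the connected component of any point belonging to an opposite line pair is a complete bipartite graph K_{k,k}; every other connected component has girth at least 5. -/

import Mathlib

open scoped Classical

/-- A pentagonal geometry PENT(k,r). -/
structure PentGeom (V : Type) [Fintype V] [DecidableEq V] (k r : ℕ) : Type where
  lines : Finset (Finset V)
  size_pos : 2 ≤ k
  rep_pos : 1 ≤ r
  pairwise : ∀ x y : V, x ≠ y → (lines.filter (fun l => x ∈ l ∧ y ∈ l)).card ≤ 1
  uniform : ∀ l ∈ lines, l.card = k
  regular : ∀ x : V, (lines.filter (fun l => x ∈ l)).card = r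
  opp : ∀ x : V,
    (Finset.univ.filter (fun y => y ≠ x ∧ ∀ l ∈ lines, ¬(x ∈ l ∧ y ∈ l))) ∈ lines

variable {V : Type} [Fintype V] [DecidableEq V] {k r : ℕ}

/-- The opposite line of a point. -/
def PentGeom.oppLine (P : PentGeom V k r) (x : V) : Finset V :=
  Finset.univ.filter (fun y => y ≠ x ∧ ∀ l ∈ P.lines, ¬(x ∈ l ∧ y ∈ l))

/-- Two points are collinear if some line contains both. -/
def PentGeom.Collinear (P : PentGeom V k r) (x y : V) : Prop :=
  x ≠ y ∧ ∃ l ∈ P.lines, x ∈ l ∧ y ∈ l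

/-- An opposite line pair. -/
def PentGeom.OppPair (P : PentGeom V k r) (l m : Finset V) : Prop :=
  l ∈ P.lines ∧ m ∈ P.lines ∧ l ≠ m ∧
    (∀ x ∈ l, P.oppLine x = m) ∧ (∀ y ∈ m, P.oppLine y = l)

/-- The deficiency graph: two points adjacent iff distinct and not collinear. -/
def PentGeom.deficiencyGraph (P : PentGeom V k r) : SimpleGraph V where
  Adj x y := x ≠ y ∧ ¬ P.Collinear x y
  symm := by
    constructor
    intro x y h
    refine ⟨h.1.symm, fun hc => h.2 ⟨h.1, ?_⟩⟩
    obtain ⟨hne, l, hl, hyl, hxl⟩ := hc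
    exact ⟨l, hl, hxl, hyl⟩
  loopless := by constructor; intro x h; exact h.1 rfl

lemma PentGeom.mem_oppLine_iff (P : PentGeom V k r) {x y : V} :
    y ∈ P.oppLine x ↔ y ≠ x ∧ ∀ l ∈ P.lines, ¬(x ∈ l ∧ y ∈ l) := by
  simp [PentGeom.oppLine]

lemma PentGeom.oppLine_mem (P : PentGeom V k r) (x : V) : P.oppLine x ∈ P.lines :=
  P.opp x

lemma PentGeom.adj_iff (P : PentGeom V k r) {x y : V} :
    P.deficiencyGraph.Adj x y ↔ y ∈ P.oppLine x := by
  rw [P.mem_oppLine_iff]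
  constructor
  · rintro ⟨hne, hnc⟩
    refine ⟨hne.symm, fun l hl ⟨hx, hy⟩ => hnc ⟨hne, l, hl, hx, hy⟩⟩
  · rintro ⟨hne, h⟩
    exact ⟨hne.symm, fun ⟨_, l, hl, hx, hy⟩ => h l hl ⟨hx, hy⟩⟩

lemma PentGeom.oppLine_symm (P : PentGeom V k r) {x y : V} (h : y ∈ P.oppLine x) :
    x ∈ P.oppLine y := P.adj_iff.mp ((P.adj_iff.mpr h).symm)

lemma PentGeom.line_unique (P : PentGeom V k r) {a b : V} {l m : Finset V}
    (hab : a ≠ b) (hl : l ∈ P.lines) (hm : m ∈ P.lines)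
    (hal : a ∈ l) (hbl : b ∈ l) (ham : a ∈ m) (hbm : b ∈ m) : l = m := by
  have h := P.pairwise a b hab
  have hl' : l ∈ P.lines.filter (fun l => a ∈ l ∧ b ∈ l) := by
    simp [hl, hal, hbl]
  have hm' : m ∈ P.lines.filter (fun l => a ∈ l ∧ b ∈ l) := by
    simp [hm, ham, hbm]
  exact Finset.card_le_one.mp h l hl' m hm'

lemma PentGeom.not_mem_oppLine_self (P : PentGeom V k r) (x : V) :
    x ∉ P.oppLine x := by
  intro h
  exact (P.mem_oppLine_iff.mp h).1 rfl

/-- The deficiency graph of a PENT(k,r) is k-regular; the connected component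
of any point of an opposite line pair is the complete bipartite graph K_{k,k} on the two
lines of the pair; every other connected component has girth at least 5. -/
theorem stmt4 (k r : ℕ) (V : Type) [Fintype V] [DecidableEq V] (P : PentGeom V k r) :
    (∀ x : V, (Finset.univ.filter (fun y => P.deficiencyGraph.Adj x y)).card = k) ∧
    (∀ l m : Finset V, P.OppPair l m →
      ∀ x ∈ l ∪ m, ∀ y : V,
        (P.deficiencyGraph.Adj x y ↔ ((x ∈ l ∧ y ∈ m) ∨ (x ∈ m ∧ y ∈ l)))) ∧
    (∀ x : V, (¬ ∃ l m : Finset V, P.OppPair l m ∧ (x ∈ l ∨ x ∈ m)) →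
      ∀ c : P.deficiencyGraph.Walk x x, c.IsCycle → 5 ≤ c.length) := by
  refine ⟨?_, ?_, ?_⟩
  · -- k-regular
    intro x
    have : Finset.univ.filter (fun y => P.deficiencyGraph.Adj x y) = P.oppLine x := by
      ext y
      simp [P.adj_iff]
    rw [this]
    exact P.uniform _ (P.oppLine_mem x)
  · -- opposite line pair components
    rintro l m ⟨hlm, hmm, hne, hl2m, hm2l⟩ x hx y
    have hxlm : ¬ (x ∈ l ∧ x ∈ m) := by
      rintro ⟨h1, h2⟩
      exact hne ((hm2l x h2).symm.trans (hl2m x h1))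
    rw [Finset.mem_union] at hx
    rcases hx with hx | hx
    · have hxm : x ∉ m := fun h => hxlm ⟨hx, h⟩
      rw [P.adj_iff, hl2m x hx]
      constructor
      · intro h; exact Or.inl ⟨hx, h⟩
      · rintro (⟨_, h⟩ | ⟨h, _⟩)
        · exact h
        · exact absurd h hxm
    · have hxl : x ∉ l := fun h => hxlm ⟨h, hx⟩
      rw [P.adj_iff, hm2l x hx]
      constructor
      · intro h; exact Or.inr ⟨hx, h⟩
      · rintro (⟨h, _⟩ | ⟨_, h⟩)
        · exact absurd h hxl
        · exact h
  · -- girth ≥ 5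
    intro x hno c hc
    by_contra hlt
    push_neg at hlt
    have h3 := hc.three_le_length
    have hcase : c.length = 3 ∨ c.length = 4 := by omega
    -- destructure the walk
    cases c with
    | nil => simp at hcase
    | cons h1 q1 =>
      cases q1 with
      | nil => simp at hcase
      | cons h2 q2 =>
        cases q2 with
        | nil => simp at hcase
        | cons h3' q3 =>
          cases q3 with
          | nil =>
            -- triangle: x - a - b - x
            exfalso
            have ha := P.adj_iff.mp h1
            have hb := P.adj_iff.mp h3'.symm
            have hab := h2
            exact hab.2 ⟨hab.1, P.oppLine x, P.oppLine_mem x, ha, hb⟩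
          | cons h4 q4 =>
            cases q4 with
            | cons h5 q5 =>
              exfalso
              simp [SimpleGraph.Walk.length_cons] at hcase
            | nil =>
              -- square: x - a - y - b - x
              exfalso
              rename_i a y b
              -- distinctness from cycle support nodup
              have hnd := hc.2
              simp [SimpleGraph.Walk.support_cons, List.nodup_cons] at hnd
              have hxy : x ≠ y := fun h => hnd.2.1.2 h.symm
              have hab : a ≠ b := hnd.1.2.1
              -- memberships
              have ha_x : a ∈ P.oppLine x := P.adj_iff.mp h1
              have hb_x : b ∈ P.oppLine x := P.adj_iff.mp h4.symm
              have ha_y : a ∈ P.oppLine y := P.adj_iff.mp h2.symm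
              have hb_y : b ∈ P.oppLine y := P.adj_iff.mp h3'
              have hx_a : x ∈ P.oppLine a := P.oppLine_symm ha_x
              have hy_a : y ∈ P.oppLine a := P.oppLine_symm ha_y
              have hx_b : x ∈ P.oppLine b := P.oppLine_symm hb_x
              have hy_b : y ∈ P.oppLine b := P.oppLine_symm hb_y
              set L := P.oppLine a with hL
              set M := P.oppLine x with hM
              have hLlines := P.oppLine_mem a
              have hMlines := P.oppLine_mem x
              have hMy : P.oppLine y = M :=
                P.line_unique hab (P.oppLine_mem y) hMlines ha_y hb_y ha_x hb_x
              have hLb : P.oppLine b = L :=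
                P.line_unique hxy (P.oppLine_mem b) hLlines hx_b hy_b hx_a hy_a
              have hLneM : L ≠ M := by
                intro h
                have hx' : x ∈ P.oppLine x := by rw [← hM, ← h]; exact hx_a
                exact P.not_mem_oppLine_self x hx'
              refine hno ⟨L, M, ⟨hLlines, hMlines, hLneM, ?_, ?_⟩, Or.inl hx_a⟩
              · intro z hz
                have haz : a ∈ P.oppLine z := P.oppLine_symm hz
                have hbz : b ∈ P.oppLine z := P.oppLine_symm (hLb ▸ hz)
                exact P.line_unique hab (P.oppLine_mem z) hMlines haz hbz ha_x hb_x
              · intro z hz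
                have hxz : x ∈ P.oppLine z := P.oppLine_symm hz
                have hyz : y ∈ P.oppLine z := P.oppLine_symm (hMy ▸ hz)
                exact P.line_unique hxy (P.oppLine_mem z) hLlines hxz hyz hx_a hy_a
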